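/- Let K(t) = 2^{-1+2t} · (t²+2)^{1-t}(t+2)^t / ((t²+t+1)(t²+1)) for t ∈ [0,1]. Then K(0) = K(1) = 1, and log K is strictly concave on (0,1); consequently K(t) ≥ 1 for all t ∈ [0,1]. -/

import Mathlib

open Real Set

noncomputable def Fk (t : ℝ) : ℝ :=
  (2*t-1)*Real.log 2 + (1-t)*Real.log (t^2+2) + t*Real.log (t+2)
    - Real.log (t^2+t+1) - Real.log (t^2+1)

noncomputable def Fk1 (t : ℝ) : ℝ :=
  2*Real.log 2 + (-Real.log (t^2+2) + (1-t)*(2*t/(t^2+2)))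
    + (Real.log (t+2) + t*(1/(t+2))) - (2*t+1)/(t^2+t+1) - 2*t/(t^2+1)

noncomputable def Fk2 (t : ℝ) : ℝ :=
  -(16+44*t+88*t^2+132*t^3+106*t^4+185*t^5+151*t^6+215*t^7+158*t^8+120*t^9
      +57*t^10+19*t^11+4*t^12+t^13)
    / ((t^2+2)^2*(t+2)^2*(t^2+t+1)^2*(t^2+1)^2)

lemma hasDerivAt_Fk {t : ℝ} (ht : t ∈ Set.Ioo (-1:ℝ) 2) : HasDerivAt Fk (Fk1 t) t := by
  obtain ⟨ht1, ht2⟩ := ht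
  have h2 : (0:ℝ) < t + 2 := by linarith
  have h3 : (0:ℝ) < t^2 + 2 := by positivity
  have h4 : (0:ℝ) < t^2 + t + 1 := by nlinarith [sq_nonneg (2*t+1)]
  have h5 : (0:ℝ) < t^2 + 1 := by positivity
  have hp : HasDerivAt (fun t:ℝ => t^2+2) (2*t) t := by
    simpa using (hasDerivAt_pow 2 t).add_const 2
  have hq : HasDerivAt (fun t:ℝ => t^2+t+1) (2*t+1) t := by
    simpa using ((hasDerivAt_pow 2 t).add (hasDerivAt_id t)).add_const 1
  have hr : HasDerivAt (fun t:ℝ => t^2+1) (2*t) t := by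
    simpa using (hasDerivAt_pow 2 t).add_const 1
  have hs : HasDerivAt (fun t:ℝ => t+2) 1 t := (hasDerivAt_id t).add_const 2
  have hA : HasDerivAt (fun t:ℝ => (2*t-1)*Real.log 2) (2*Real.log 2) t := by
    simpa using (((hasDerivAt_id t).const_mul 2).sub_const 1).mul_const (Real.log 2)
  have hB : HasDerivAt (fun t:ℝ => (1-t)*Real.log (t^2+2))
      ((-1)*Real.log (t^2+2) + (1-t)*(2*t/(t^2+2))) t := by
    have hgb : HasDerivAt (fun t:ℝ => (1-t)) (-1) t := by
      simpa using (hasDerivAt_id t).const_sub 1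
    exact hgb.mul (hp.log h3.ne')
  have hC : HasDerivAt (fun t:ℝ => t*Real.log (t+2))
      (1*Real.log (t+2) + t*(1/(t+2))) t :=
    (hasDerivAt_id t).mul (hs.log h2.ne')
  have hD := hq.log h4.ne'
  have hE := hr.log h5.ne'
  have htot := (((hA.add hB).add hC).sub hD).sub hE
  have hd : 2*Real.log 2 + ((-1)*Real.log (t^2+2) + (1-t)*(2*t/(t^2+2)))
      + (1*Real.log (t+2) + t*(1/(t+2))) - (2*t+1)/(t^2+t+1) - 2*t/(t^2+1) = Fk1 t := by
    unfold Fk1; ring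
  exact hd ▸ htot

lemma hasDerivAt_Fk1 {t : ℝ} (ht : t ∈ Set.Ioo (-1:ℝ) 2) : HasDerivAt Fk1 (Fk2 t) t := by
  obtain ⟨ht1, ht2⟩ := ht
  have h2 : (0:ℝ) < t + 2 := by linarith
  have h3 : (0:ℝ) < t^2 + 2 := by positivity
  have h4 : (0:ℝ) < t^2 + t + 1 := by nlinarith [sq_nonneg (2*t+1)]
  have h5 : (0:ℝ) < t^2 + 1 := by positivity
  have hp : HasDerivAt (fun t:ℝ => t^2+2) (2*t) t := by
    simpa using (hasDerivAt_pow 2 t).add_const 2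
  have hq : HasDerivAt (fun t:ℝ => t^2+t+1) (2*t+1) t := by
    simpa using ((hasDerivAt_pow 2 t).add (hasDerivAt_id t)).add_const 1
  have hr : HasDerivAt (fun t:ℝ => t^2+1) (2*t) t := by
    simpa using (hasDerivAt_pow 2 t).add_const 1
  have hs : HasDerivAt (fun t:ℝ => t+2) 1 t := (hasDerivAt_id t).add_const 2
  have h2t : HasDerivAt (fun y:ℝ => 2*y) 2 t := by simpa using (hasDerivAt_id t).const_mul 2
  have hgb : HasDerivAt (fun t:ℝ => (1-t)) (-1) t := by
    simpa using (hasDerivAt_id t).const_sub 1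
  have a1 : HasDerivAt (fun _:ℝ => 2*Real.log 2) 0 t := hasDerivAt_const t _
  have a2 : HasDerivAt (fun x:ℝ => -Real.log (x^2+2)) (-(2*t/(t^2+2))) t := (hp.log h3.ne').neg
  have hfrac : HasDerivAt (fun x:ℝ => 2*x/(x^2+2))
      ((2*(t^2+2) - 2*t*(2*t))/(t^2+2)^2) t := by
    exact h2t.div hp h3.ne'
  have a3 : HasDerivAt (fun x:ℝ => (1-x)*(2*x/(x^2+2)))
      ((-1)*(2*t/(t^2+2)) + (1-t)*((2*(t^2+2) - 2*t*(2*t))/(t^2+2)^2)) t := hgb.mul hfrac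
  have a4 : HasDerivAt (fun x:ℝ => Real.log (x+2)) (1/(t+2)) t := hs.log h2.ne'
  have a5 : HasDerivAt (fun x:ℝ => x*(1/(x+2)))
      (1*(1/(t+2)) + t*((0*(t+2)-1*1)/(t+2)^2)) t :=
    (hasDerivAt_id t).mul ((hasDerivAt_const t 1).div hs h2.ne')
  have a6 : HasDerivAt (fun x:ℝ => (2*x+1)/(x^2+x+1))
      ((2*(t^2+t+1) - (2*t+1)*(2*t+1))/(t^2+t+1)^2) t := by
    exact (h2t.add_const 1).div hq h4.ne'
  have a7 : HasDerivAt (fun x:ℝ => 2*x/(x^2+1))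
      ((2*(t^2+1) - 2*t*(2*t))/(t^2+1)^2) t := by
    exact h2t.div hr h5.ne'
  have htot := ((((a1.add (a2.add a3)).add (a4.add a5)).sub a6).sub a7)
  have hd : 0 + (-(2*t/(t^2+2)) + ((-1)*(2*t/(t^2+2)) + (1-t)*((2*(t^2+2) - 2*t*(2*t))/(t^2+2)^2)))
      + (1/(t+2) + (1*(1/(t+2)) + t*((0*(t+2)-1*1)/(t+2)^2)))
      - (2*(t^2+t+1) - (2*t+1)*(2*t+1))/(t^2+t+1)^2
      - (2*(t^2+1) - 2*t*(2*t))/(t^2+1)^2 = Fk2 t := by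
    have h4' := h4.ne'
    unfold Fk2; set u := t^2+t+1 with hu; field_simp; rw [hu]; ring
  exact hd ▸ htot

lemma Fk2_neg {t : ℝ} (ht : t ∈ Set.Ioo (0:ℝ) 1) : Fk2 t < 0 := by
  obtain ⟨ht1, ht2⟩ := ht
  have h2 : (0:ℝ) < t + 2 := by linarith
  have h3 : (0:ℝ) < t^2 + 2 := by positivity
  have h4 : (0:ℝ) < t^2 + t + 1 := by positivity
  have h5 : (0:ℝ) < t^2 + 1 := by positivity
  have hden : (0:ℝ) < (t^2+2)^2*(t+2)^2*(t^2+t+1)^2*(t^2+1)^2 := by positivity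
  have hnum : -(16+44*t+88*t^2+132*t^3+106*t^4+185*t^5+151*t^6+215*t^7+158*t^8+120*t^9
      +57*t^10+19*t^11+4*t^12+t^13) < 0 := by
    have : (0:ℝ) < 16+44*t+88*t^2+132*t^3+106*t^4+185*t^5+151*t^6+215*t^7+158*t^8+120*t^9
        +57*t^10+19*t^11+4*t^12+t^13 := by positivity
    linarith
  exact div_neg_of_neg_of_pos hnum hden

lemma strictConcaveOn_Fk : StrictConcaveOn ℝ (Set.Icc (0:ℝ) 1) Fk := by
  apply strictConcaveOn_of_deriv2_neg (convex_Icc 0 1)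
  · intro x hx
    exact (hasDerivAt_Fk ⟨by linarith [hx.1], by linarith [hx.2]⟩).continuousAt.continuousWithinAt
  · intro x hx
    rw [interior_Icc] at hx
    have hU : Set.Ioo (-1:ℝ) 2 ∈ nhds x := Ioo_mem_nhds (by linarith [hx.1]) (by linarith [hx.2])
    have hev : deriv Fk =ᶠ[nhds x] Fk1 :=
      Filter.eventuallyEq_of_mem hU (fun y hy => (hasDerivAt_Fk hy).deriv)
    have : deriv^[2] Fk x = deriv (deriv Fk) x := rfl
    rw [this, hev.deriv_eq, (hasDerivAt_Fk1 ⟨by linarith [hx.1], by linarith [hx.2]⟩).deriv]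
    exact Fk2_neg hx

theorem stmt_7 (K : ℝ → ℝ)
    (hK : ∀ t : ℝ, K t = 2 ^ (-1 + 2 * t) * (t ^ 2 + 2) ^ (1 - t) * (t + 2) ^ t /
        ((t ^ 2 + t + 1) * (t ^ 2 + 1))) :
    K 0 = 1 ∧ K 1 = 1 ∧
      StrictConcaveOn ℝ (Set.Ioo (0 : ℝ) 1) (fun t => Real.log (K t)) ∧
      ∀ t ∈ Set.Icc (0 : ℝ) 1, 1 ≤ K t := by
  have hpos : ∀ t : ℝ, 0 ≤ t → 0 < K t := by
    intro t ht
    rw [hK t]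
    have h2 : (0:ℝ) < t + 2 := by linarith
    have h4 : (0:ℝ) < t^2 + t + 1 := by positivity
    positivity
  have hlogK : ∀ t : ℝ, 0 ≤ t → Real.log (K t) = Fk t := by
    intro t ht
    have h2 : (0:ℝ) < t + 2 := by linarith
    have h3 : (0:ℝ) < t^2 + 2 := by positivity
    have h4 : (0:ℝ) < t^2 + t + 1 := by positivity
    have h5 : (0:ℝ) < t^2 + 1 := by positivity
    have pa : (0:ℝ) < (2:ℝ) ^ (-1 + 2*t) := Real.rpow_pos_of_pos two_pos _
    have pb : (0:ℝ) < (t^2+2) ^ (1-t) := Real.rpow_pos_of_pos h3 _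
    have pc : (0:ℝ) < (t+2) ^ t := Real.rpow_pos_of_pos h2 _
    rw [hK t, Real.log_div (by positivity) (by positivity),
      Real.log_mul (by positivity) pc.ne', Real.log_mul pa.ne' pb.ne',
      Real.log_mul h4.ne' h5.ne',
      Real.log_rpow two_pos, Real.log_rpow h3, Real.log_rpow h2]
    unfold Fk; ring
  have hF0 : Fk 0 = 0 := by unfold Fk; norm_num
  have hF1 : Fk 1 = 0 := by unfold Fk; norm_num
  have hK0 : K 0 = 1 := by
    have := hlogK 0 le_rfl
    have h := Real.exp_log (hpos 0 le_rfl)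
    rw [this, hF0, Real.exp_zero] at h
    exact h.symm
  have hK1 : K 1 = 1 := by
    have := hlogK 1 zero_le_one
    have h := Real.exp_log (hpos 1 zero_le_one)
    rw [this, hF1, Real.exp_zero] at h
    exact h.symm
  have hSC := strictConcaveOn_Fk
  refine ⟨hK0, hK1, ?_, ?_⟩
  · have hSCIoo := hSC.subset Set.Ioo_subset_Icc_self (convex_Ioo 0 1)
    refine ⟨convex_Ioo 0 1, fun x hx y hy hxy a b ha hb hab => ?_⟩
    have hmem := (convex_Ioo (0:ℝ) 1) hx hy ha.le hb.le hab
    simp only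
    rw [hlogK x hx.1.le, hlogK y hy.1.le, hlogK _ hmem.1.le]
    exact hSCIoo.2 hx hy hxy ha hb hab
  · intro t ht
    have hFt : 0 ≤ Fk t := by
      have h := hSC.concaveOn.2 (show (0:ℝ) ∈ Set.Icc (0:ℝ) 1 by norm_num)
        (show (1:ℝ) ∈ Set.Icc (0:ℝ) 1 by norm_num)
        (by linarith [ht.2] : (0:ℝ) ≤ 1 - t) ht.1 (by ring)
      simpa [hF0, hF1, smul_eq_mul] using h
    have h := Real.exp_log (hpos t ht.1)
    calc (1:ℝ) = Real.exp 0 := Real.exp_zero.symm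
      _ ≤ Real.exp (Real.log (K t)) := Real.exp_le_exp.mpr (by rw [hlogK t ht.1]; exact hFt)
      _ = K t := h
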